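/- (Lemma 6.2, unbounded case.) If S is unbounded (F̄(x) > 0 for all x > 0) and the tail of S has upper Matuszewska index less than −2, expressed via the equivalent Potter-type bound — there exist constants C > 0, ε > 0 and x₀ > 0 such that F̄(γx) ≤ C·γ^{−(2+ε)}·F̄(x) for all x ≥ x₀ and all γ ≥ 1 — then the M/G/1 SRPT mean response time dominates the logarithm of 1/(1−ρ) in heavy traffic: lim_{λ → (1/m)⁻} ln(1/(1−λm)) / T̄(λ) = 0. -/

import Mathlib

open MeasureTheory Filter

/-- Relevant load `ρ_{≤x} = λ ∫₀^x t f(t) dt`. -/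
noncomputable def rhoLe (f : ℝ → ℝ) (lam x : ℝ) : ℝ :=
  lam * ∫ t in (0:ℝ)..x, t * f t

/-- Tail of the service requirement distribution, `F̄(x) = ∫_x^∞ f(t) dt`. -/
noncomputable def tailS (f : ℝ → ℝ) (x : ℝ) : ℝ :=
  ∫ t in Set.Ioi x, f t

/-- Schrage's exact formula `T̄_λ(x)` for the mean response time of a size-`x`
job in an M/G/1 queue under SRPT. -/
noncomputable def Tsrpt1 (f : ℝ → ℝ) (lam x : ℝ) : ℝ :=
  (lam * (∫ t in (0:ℝ)..x, t ^ 2 * f t) + lam * x ^ 2 * tailS f x)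
      / (2 * (1 - rhoLe f lam x) ^ 2)
    + ∫ t in (0:ℝ)..x, 1 / (1 - rhoLe f lam t)

/-- Overall M/G/1 SRPT mean response time `T̄(λ) = ∫₀^∞ T̄_λ(x) f(x) dx`. -/
noncomputable def TsrptMean (f : ℝ → ℝ) (lam : ℝ) : ℝ :=
  ∫ x in Set.Ioi (0:ℝ), Tsrpt1 f lam x * f x

private lemma aux_int_univ (g : ℝ → ℝ) (h0 : ∀ x ≤ 0, g x = 0)
    (h : IntegrableOn g (Set.Ioi 0)) : Integrable g := by
  rw [← integrableOn_univ, ← Set.Iic_union_Ioi (a := (0:ℝ))]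
  refine IntegrableOn.union ?_ h
  have : Set.EqOn g 0 (Set.Iic 0) := fun x hx => h0 x hx
  exact (integrableOn_congr_fun this measurableSet_Iic).mpr (integrableOn_zero)

private lemma aux_tail_split (g : ℝ → ℝ) (h0 : ∀ x ≤ 0, g x = 0) (h : Integrable g) (x : ℝ) :
    ∫ t in Set.Ioi x, g t = (∫ t in Set.Ioi 0, g t) - ∫ t in (0:ℝ)..x, g t := by
  rcases le_or_gt 0 x with hx | hx
  · rw [intervalIntegral.integral_of_le hx, eq_sub_iff_add_eq, add_comm,
      ← setIntegral_union (Set.Ioc_disjoint_Ioi le_rfl) measurableSet_Ioi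
        h.integrableOn h.integrableOn, Set.Ioc_union_Ioi_eq_Ioi hx]
  · have h1 : ∫ t in (0:ℝ)..x, g t = 0 := by
      rw [intervalIntegral.integral_symm, intervalIntegral.integral_of_le hx.le]
      rw [setIntegral_congr_fun measurableSet_Ioc (g := fun _ => (0:ℝ))
        (fun t ht => h0 t ht.2)]
      simp
    have h2 : ∫ t in Set.Ioc x 0, g t = 0 := by
      rw [setIntegral_congr_fun measurableSet_Ioc (g := fun _ => (0:ℝ))
        (fun t ht => h0 t ht.2)]
      simp
    rw [h1, sub_zero, ← Set.Ioc_union_Ioi_eq_Ioi hx.le,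
      setIntegral_union (Set.Ioc_disjoint_Ioi le_rfl) measurableSet_Ioi
        h.integrableOn h.integrableOn, h2, zero_add]

private lemma aux_tail_anti (g : ℝ → ℝ) (hg : ∀ x, 0 ≤ g x) (h : Integrable g) :
    Antitone (fun x => ∫ t in Set.Ioi x, g t) := by
  intro x y hxy
  exact setIntegral_mono_set h.integrableOn
    (Filter.Eventually.of_forall fun t => hg t)
    (HasSubset.Subset.eventuallyLE (Set.Ioi_subset_Ioi hxy))

private lemma aux_tail_cont (g : ℝ → ℝ) (h0 : ∀ x ≤ 0, g x = 0) (h : Integrable g) :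
    Continuous (fun x => ∫ t in Set.Ioi x, g t) := by
  have : (fun x => ∫ t in Set.Ioi x, g t)
      = fun x => (∫ t in Set.Ioi 0, g t) - ∫ t in (0:ℝ)..x, g t := by
    funext x; exact aux_tail_split g h0 h x
  rw [this]
  exact continuous_const.sub
    (intervalIntegral.continuous_primitive (fun a b => h.intervalIntegrable) 0)

private lemma aux_block_int (f : ℝ → ℝ) (hf_meas : Measurable f) (hf_nonneg : ∀ x, 0 ≤ f x)
    (hf_int : Integrable f) (p : ℕ) (A B : ℝ) (hA : 0 ≤ A) :
    IntegrableOn (fun t => t^p * f t) (Set.Ioc A B) := by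
  refine Integrable.mono' (g := fun t => B^p * f t)
    ((hf_int.integrableOn).const_mul _)
    ((measurable_id.pow_const p).mul hf_meas).aestronglyMeasurable ?_
  rw [ae_restrict_iff' measurableSet_Ioc]
  refine Filter.Eventually.of_forall fun t ht => ?_
  have ht0 : 0 ≤ t := hA.trans ht.1.le
  rw [Real.norm_of_nonneg (mul_nonneg (pow_nonneg ht0 p) (hf_nonneg t))]
  exact mul_le_mul_of_nonneg_right (pow_le_pow_left₀ ht0 ht.2 p) (hf_nonneg t)

private lemma aux_dyadic (f : ℝ → ℝ) (hf_meas : Measurable f) (hf_nonneg : ∀ x, 0 ≤ f x)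
    (hf_int : Integrable f)
    (C ε : ℝ) (hC : 0 < C) (hε : 0 < ε) (x₀ : ℝ) (hx₀ : 0 < x₀)
    (hPot : ∀ x ≥ x₀, ∀ γ ≥ (1:ℝ), tailS f (γ * x) ≤ C * γ ^ (-(2 + ε)) * tailS f x)
    (p : ℕ) (hp : (p:ℝ) ≤ 2) (b : ℝ) (hb : x₀ ≤ b) (N : ℕ) :
    ∫ t in Set.Ioc b (2^N * b), t^p * f t
      ≤ 2^p * C * b^p * tailS f b * (1 - (2:ℝ)^((p:ℝ)-(2+ε)))⁻¹ := by
  have hb0 : 0 < b := hx₀.trans_le hb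
  set r : ℝ := (2:ℝ)^((p:ℝ)-(2+ε)) with hr_def
  have hr0 : 0 < r := Real.rpow_pos_of_pos two_pos _
  have hr1 : r < 1 := by
    apply Real.rpow_lt_one_of_one_lt_of_neg one_lt_two
    linarith
  have htail_nonneg : 0 ≤ tailS f b :=
    setIntegral_nonneg measurableSet_Ioi fun t _ => hf_nonneg t
  set M : ℝ := 2^p * C * b^p * tailS f b with hM_def
  have hM0 : 0 ≤ M := by
    apply mul_nonneg (mul_nonneg (mul_nonneg (by positivity) hC.le) (by positivity)) htail_nonneg
  have hblock : ∀ k : ℕ, ∫ t in Set.Ioc ((2:ℝ)^k * b) ((2:ℝ)^(k+1) * b), t^p * f t ≤ M * r^k := by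
    intro k
    have h2k1 : (1:ℝ) ≤ (2:ℝ)^k := one_le_pow₀ one_le_two
    have h1 : ∫ t in Set.Ioc ((2:ℝ)^k * b) ((2:ℝ)^(k+1) * b), t^p * f t
        ≤ ∫ t in Set.Ioc ((2:ℝ)^k * b) ((2:ℝ)^(k+1) * b), ((2:ℝ)^(k+1) * b)^p * f t := by
      refine setIntegral_mono_on
        (aux_block_int f hf_meas hf_nonneg hf_int p _ _ (by positivity))
        ((hf_int.integrableOn).const_mul _) measurableSet_Ioc fun t ht => ?_
      have ht0 : 0 ≤ t := (by positivity : (0:ℝ) ≤ (2:ℝ)^k * b).trans ht.1.le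
      exact mul_le_mul_of_nonneg_right (pow_le_pow_left₀ ht0 ht.2 p) (hf_nonneg t)
    have h2 : ∫ t in Set.Ioc ((2:ℝ)^k * b) ((2:ℝ)^(k+1) * b), ((2:ℝ)^(k+1) * b)^p * f t
        ≤ ((2:ℝ)^(k+1) * b)^p * tailS f ((2:ℝ)^k * b) := by
      rw [integral_const_mul]
      refine mul_le_mul_of_nonneg_left ?_ (by positivity)
      exact setIntegral_mono_set hf_int.integrableOn
        (Filter.Eventually.of_forall fun t => hf_nonneg t)
        (HasSubset.Subset.eventuallyLE Set.Ioc_subset_Ioi_self)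
    have h3 : tailS f ((2:ℝ)^k * b) ≤ C * ((2:ℝ)^k) ^ (-(2+ε)) * tailS f b :=
      hPot b hb ((2:ℝ)^k) h2k1
    have key : ((2:ℝ)^(k+1) * b)^p * (C * ((2:ℝ)^k) ^ (-(2+ε)) * tailS f b) = M * r^k := by
      rw [hM_def, hr_def, mul_pow]
      have e1 : ((2:ℝ)^(k+1))^p = (2:ℝ)^p * ((2:ℝ)^((k:ℝ)*(p:ℝ))) := by
        rw [← pow_mul, ← Real.rpow_natCast (2:ℝ) ((k+1)*p), ← Real.rpow_natCast (2:ℝ) p,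
          ← Real.rpow_add two_pos]
        congr 1; push_cast; ring
      have e2 : ((2:ℝ)^k : ℝ) ^ (-(2+ε)) = (2:ℝ) ^ ((k:ℝ) * (-(2+ε))) := by
        rw [← Real.rpow_natCast (2:ℝ) k, ← Real.rpow_mul (by norm_num : (0:ℝ) ≤ 2)]
      have e3 : ((2:ℝ)^((p:ℝ)-(2+ε)))^k = (2:ℝ) ^ ((k:ℝ)*(p:ℝ) + (k:ℝ) * (-(2+ε))) := by
        rw [← Real.rpow_natCast ((2:ℝ)^((p:ℝ)-(2+ε))) k,
          ← Real.rpow_mul (by norm_num : (0:ℝ) ≤ 2)]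
        congr 1; ring
      rw [e1, e2, e3, Real.rpow_add two_pos]
      ring
    calc ∫ t in Set.Ioc ((2:ℝ)^k * b) ((2:ℝ)^(k+1) * b), t^p * f t
        ≤ ((2:ℝ)^(k+1) * b)^p * tailS f ((2:ℝ)^k * b) := h1.trans h2
      _ ≤ ((2:ℝ)^(k+1) * b)^p * (C * ((2:ℝ)^k) ^ (-(2+ε)) * tailS f b) :=
          mul_le_mul_of_nonneg_left h3 (by positivity)
      _ = M * r^k := key
  have hsum : ∀ N : ℕ, ∫ t in Set.Ioc b ((2:ℝ)^N * b), t^p * f t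
      ≤ M * ∑ k ∈ Finset.range N, r^k := by
    intro N
    induction N with
    | zero => simp
    | succ n ih =>
      have hle1 : b ≤ (2:ℝ)^n * b := le_mul_of_one_le_left hb0.le (one_le_pow₀ one_le_two)
      have hle2 : (2:ℝ)^n * b ≤ (2:ℝ)^(n+1) * b := by
        apply mul_le_mul_of_nonneg_right (pow_le_pow_right₀ one_le_two (by omega)) hb0.le
      rw [← Set.Ioc_union_Ioc_eq_Ioc hle1 hle2,
        setIntegral_union (Set.Ioc_disjoint_Ioc_of_le le_rfl) measurableSet_Ioc
          (aux_block_int f hf_meas hf_nonneg hf_int p _ _ hb0.le)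
          (aux_block_int f hf_meas hf_nonneg hf_int p _ _ (by positivity)),
        Finset.sum_range_succ, mul_add]
      exact add_le_add (ih) (hblock n)
  refine (hsum N).trans ?_
  refine mul_le_mul_of_nonneg_left ?_ hM0
  rw [geom_sum_eq hr1.ne N]
  have h0 : (0:ℝ) ≤ r ^ N := pow_nonneg hr0.le N
  have h1 : r ^ N ≤ 1 := pow_le_one₀ hr0.le hr1.le
  have h2 : (r ^ N - 1) / (r - 1) = (1 - r ^ N) / (1 - r) := by
    rw [← neg_div_neg_eq]; ring_nf
  rw [h2, inv_eq_one_div]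
  exact (div_le_div_iff_of_pos_right (by linarith : (0:ℝ) < 1 - r)).mpr (by linarith)

set_option maxHeartbeats 2000000 in
/-- **Lemma 6.2, unbounded case.** If `S` is unbounded with tail of upper
Matuszewska index less than `−2` (Potter-type bound), then
`lim_{λ → (1/m)⁻} ln(1/(1−λm)) / T̄(λ) = 0`. -/
theorem log_over_Tsrpt1_tendsto_zero_unbounded
    (f : ℝ → ℝ) (m : ℝ)
    (hf_meas : Measurable f)
    (hf_nonneg : ∀ x, 0 ≤ f x)
    (hf_zero : ∀ x ≤ 0, f x = 0)
    (hf_prob : ∫ t in Set.Ioi (0:ℝ), f t = 1)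
    (hm_int : Integrable (fun t => t * f t) (volume.restrict (Set.Ioi 0)))
    (hm_def : m = ∫ t in Set.Ioi (0:ℝ), t * f t)
    (hm_pos : 0 < m)
    (hunbounded : ∀ x > (0:ℝ), 0 < tailS f x)
    (hmatuszewska : ∃ C > (0:ℝ), ∃ ε > (0:ℝ), ∃ x₀ > (0:ℝ),
      ∀ x ≥ x₀, ∀ γ ≥ (1:ℝ), tailS f (γ * x) ≤ C * γ ^ (-(2 + ε)) * tailS f x) :
    Tendsto (fun lam => Real.log (1 / (1 - lam * m)) / TsrptMean f lam)
      (nhdsWithin (1/m) (Set.Iio (1/m))) (nhds 0) := by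
  obtain ⟨C, hC, ε, hε, x₀, hx₀, hPot⟩ := hmatuszewska
  have hminv : 0 < 1/m := by positivity
  -- basic integrability and positivity facts
  have hf_int0 : IntegrableOn f (Set.Ioi 0) := by
    by_contra h
    rw [integral_undef h] at hf_prob; norm_num at hf_prob
  have hf_int : Integrable f := aux_int_univ f hf_zero hf_int0
  have htf_zero : ∀ x ≤ (0:ℝ), x * f x = 0 := fun x hx => by rw [hf_zero x hx, mul_zero]
  have htf_int : Integrable (fun t => t * f t) := aux_int_univ _ htf_zero hm_int
  have htf_nonneg : ∀ t : ℝ, 0 ≤ t * f t := by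
    intro t
    rcases le_or_gt t 0 with h | h
    · rw [hf_zero t h, mul_zero]
    · exact mul_nonneg h.le (hf_nonneg t)
  have ht2f_nonneg : ∀ t : ℝ, 0 ≤ t^2 * f t := fun t => mul_nonneg (sq_nonneg t) (hf_nonneg t)
  have hTnonneg : ∀ x, 0 ≤ tailS f x :=
    fun x => setIntegral_nonneg measurableSet_Ioi fun t _ => hf_nonneg t
  have hTanti : Antitone (tailS f) := aux_tail_anti f hf_nonneg hf_int
  -- the function G
  set G : ℝ → ℝ := fun x => ∫ t in Set.Ioi x, t * f t with hG_def
  have hG_eq : ∀ x, G x = m - ∫ t in (0:ℝ)..x, t * f t := by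
    intro x
    rw [hG_def]
    simp only
    rw [aux_tail_split _ htf_zero htf_int x, ← hm_def]
  have hG_anti : Antitone G := aux_tail_anti _ htf_nonneg htf_int
  have hG_nonneg : ∀ x, 0 ≤ G x :=
    fun x => setIntegral_nonneg measurableSet_Ioi fun t _ => htf_nonneg t
  have hG_cont : Continuous G := aux_tail_cont _ htf_zero htf_int
  have hG_pos : ∀ x, 0 < x → 0 < G x := by
    intro x hx
    have h1 : x * tailS f x ≤ G x := by
      rw [hG_def]; simp only
      rw [tailS, ← integral_const_mul]
      exact setIntegral_mono_on (hf_int.integrableOn.const_mul x) htf_int.integrableOn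
        measurableSet_Ioi (fun t ht => mul_le_mul_of_nonneg_right (le_of_lt ht) (hf_nonneg t))
    exact lt_of_lt_of_le (mul_pos hx (hunbounded x hx)) h1
  have hG_to0 : Tendsto G atTop (nhds 0) := by
    have h1 : Tendsto (fun x : ℝ => ∫ t in (0:ℝ)..x, t * f t) atTop (nhds m) := by
      rw [hm_def]
      exact intervalIntegral_tendsto_integral_Ioi 0 hm_int tendsto_id
    have h2 := (tendsto_const_nhds (x := m) (f := atTop (α := ℝ))).sub h1
    rw [sub_self] at h2
    refine h2.congr fun x => (hG_eq x).symm
  -- rhoLe identity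
  have hrho : ∀ lam x, 1 - rhoLe f lam x = (1 - lam * m) + lam * G x := by
    intro lam x
    have hx := hG_eq x
    rw [rhoLe, show (∫ t in (0:ℝ)..x, t * f t) = m - G x by linarith]
    ring
  -- C ≥ 1
  have hC1 : 1 ≤ C := by
    have h := hPot x₀ le_rfl 1 le_rfl
    rw [one_mul, Real.one_rpow, mul_one] at h
    have h2 := hunbounded x₀ hx₀
    nlinarith
  -- second moment
  have ht2i_Ioi : IntegrableOn (fun t => t^2 * f t) (Set.Ioi x₀) := by
    refine integrableOn_Ioi_of_intervalIntegral_norm_bounded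
      (2^2 * C * x₀^2 * tailS f x₀ * (1 - (2:ℝ)^(((2:ℕ):ℝ)-(2+ε)))⁻¹) x₀
      (fun i : ℕ => aux_block_int f hf_meas hf_nonneg hf_int 2 x₀ ((2:ℝ)^i * x₀) hx₀.le)
      (Tendsto.atTop_mul_const hx₀ (tendsto_pow_atTop_atTop_of_one_lt one_lt_two)) ?_
    refine Filter.Eventually.of_forall fun i => ?_
    have hle : x₀ ≤ (2:ℝ)^i * x₀ := le_mul_of_one_le_left hx₀.le (one_le_pow₀ one_le_two)
    rw [intervalIntegral.integral_of_le hle]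
    rw [setIntegral_congr_fun measurableSet_Ioc (g := fun t => t^2 * f t)
      (fun t _ => Real.norm_of_nonneg (ht2f_nonneg t))]
    exact aux_dyadic f hf_meas hf_nonneg hf_int C ε hC hε x₀ hx₀ hPot 2 (by norm_num) x₀ le_rfl i
  have ht2i : IntegrableOn (fun t => t^2 * f t) (Set.Ioi 0) := by
    rw [← Set.Ioc_union_Ioi_eq_Ioi hx₀.le]
    exact (aux_block_int f hf_meas hf_nonneg hf_int 2 0 x₀ le_rfl).union ht2i_Ioi
  have ht2f_zero : ∀ x ≤ (0:ℝ), x^2 * f x = 0 := fun x hx => by rw [hf_zero x hx, mul_zero]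
  have ht2_int : Integrable (fun t => t^2 * f t) := aux_int_univ _ ht2f_zero ht2i
  set M₂ : ℝ := ∫ t in Set.Ioi (0:ℝ), t^2 * f t with hM₂def
  have hx2F : ∀ x : ℝ, 0 < x → x^2 * tailS f x ≤ M₂ := by
    intro x hx
    have h1 : x^2 * tailS f x ≤ ∫ t in Set.Ioi x, t^2 * f t := by
      rw [tailS, ← integral_const_mul]
      refine setIntegral_mono_on (hf_int.integrableOn.const_mul _) ht2_int.integrableOn
        measurableSet_Ioi (fun t ht => ?_)
      exact mul_le_mul_of_nonneg_right (pow_le_pow_left₀ hx.le (le_of_lt ht) 2) (hf_nonneg t)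
    refine h1.trans (setIntegral_mono_set ht2i
      (Filter.Eventually.of_forall fun t => ht2f_nonneg t)
      (HasSubset.Subset.eventuallyLE (Set.Ioi_subset_Ioi hx.le)))
  have hI2M : ∀ x : ℝ, 0 < x → (∫ t in (0:ℝ)..x, t^2 * f t) ≤ M₂ := by
    intro x hx
    rw [intervalIntegral.integral_of_le hx.le]
    exact setIntegral_mono_set ht2i
      (Filter.Eventually.of_forall fun t => ht2f_nonneg t)
      (HasSubset.Subset.eventuallyLE Set.Ioc_subset_Ioi_self)
  have hM₂nonneg : 0 ≤ M₂ :=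
    setIntegral_nonneg measurableSet_Ioi fun t _ => ht2f_nonneg t
  -- constant K₁ and the bound G b ≤ K₁ b F̄(b)
  set K₁ : ℝ := 2 * C * (1 - (2:ℝ)^(((1:ℕ):ℝ)-(2+ε)))⁻¹ with hK₁def
  have hr1lt : (2:ℝ)^(((1:ℕ):ℝ)-(2+ε)) < 1 := by
    apply Real.rpow_lt_one_of_one_lt_of_neg one_lt_two
    push_cast; linarith
  have hr1pos : (0:ℝ) < (2:ℝ)^(((1:ℕ):ℝ)-(2+ε)) := Real.rpow_pos_of_pos two_pos _
  have hK₁pos : 0 < K₁ := by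
    rw [hK₁def]
    have h0 : (0:ℝ) < 1 - (2:ℝ)^(((1:ℕ):ℝ)-(2+ε)) := by linarith
    positivity
  have hGK : ∀ b, x₀ ≤ b → G b ≤ K₁ * b * tailS f b := by
    intro b hb
    have hb0 : 0 < b := hx₀.trans_le hb
    have hmono : Monotone (fun N : ℕ => Set.Ioc b ((2:ℝ)^N * b)) := by
      intro i j hij
      exact Set.Ioc_subset_Ioc le_rfl
        (mul_le_mul_of_nonneg_right (pow_le_pow_right₀ one_le_two hij) hb0.le)
    have hunion : (⋃ N : ℕ, Set.Ioc b ((2:ℝ)^N * b)) = Set.Ioi b := by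
      ext t
      simp only [Set.mem_iUnion, Set.mem_Ioc, Set.mem_Ioi]
      constructor
      · rintro ⟨n, h1, _⟩; exact h1
      · intro ht
        obtain ⟨n, hn⟩ := pow_unbounded_of_one_lt (t/b) one_lt_two
        refine ⟨n, ht, ?_⟩
        exact (div_le_iff₀ hb0).mp hn.le
    have htend := tendsto_setIntegral_of_monotone (fun N : ℕ => measurableSet_Ioc) hmono
      (by rw [hunion]; exact htf_int.integrableOn)
    rw [hunion] at htend
    refine le_of_tendsto htend (Filter.Eventually.of_forall fun N => ?_)
    have h := aux_dyadic f hf_meas hf_nonneg hf_int C ε hC hε x₀ hx₀ hPot 1 (by norm_num) b hb N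
    simp only [pow_one] at h
    refine h.trans (le_of_eq ?_)
    rw [hK₁def]; ring
  -- polynomial decay of G
  set C₃ : ℝ := K₁ * C * tailS f x₀ * x₀^(2+ε) with hC₃def
  have hC₃pos : 0 < C₃ := by
    have := hunbounded x₀ hx₀
    have h2 : (0:ℝ) < x₀^(2+ε) := Real.rpow_pos_of_pos hx₀ _
    rw [hC₃def]; positivity
  have hGb_poly : ∀ b, x₀ ≤ b → G b ≤ C₃ * b^(-(1+ε)) := by
    intro b hb
    have hb0 : 0 < b := hx₀.trans_le hb
    have h1 : tailS f b ≤ C * (b/x₀)^(-(2+ε)) * tailS f x₀ := by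
      have h := hPot x₀ le_rfl (b/x₀) ((one_le_div hx₀).mpr hb)
      rwa [div_mul_cancel₀ _ hx₀.ne'] at h
    have h2 : (b/x₀)^(-(2+ε)) = b^(-(2+ε)) * x₀^(2+ε) := by
      rw [Real.div_rpow hb0.le hx₀.le, div_eq_mul_inv, ← Real.rpow_neg hx₀.le, neg_neg]
    have h3 : b * b^(-(2+ε)) = b^(-(1+ε)) := by
      nth_rewrite 1 [← Real.rpow_one b]
      rw [← Real.rpow_add hb0]
      congr 1; ring
    calc G b ≤ K₁ * b * tailS f b := hGK b hb
      _ ≤ K₁ * b * (C * (b^(-(2+ε)) * x₀^(2+ε)) * tailS f x₀) := by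
          rw [← h2]
          exact mul_le_mul_of_nonneg_left h1 (by positivity)
      _ = C₃ * (b * b^(-(2+ε))) := by rw [hC₃def]; ring
      _ = C₃ * b^(-(1+ε)) := by rw [h3]
  -- the constant c = ∫₀^a t² f(t) dt > 0
  obtain ⟨n, hn⟩ : ∃ n : ℕ, 1/2 < ∫ t in Set.Ioc (0:ℝ) n, f t := by
    have hIocU : (⋃ n : ℕ, Set.Ioc (0:ℝ) n) = Set.Ioi 0 := by
      ext t
      simp only [Set.mem_iUnion, Set.mem_Ioc, Set.mem_Ioi]
      constructor
      · rintro ⟨n, h1, _⟩; exact h1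
      · intro ht
        obtain ⟨n, hn⟩ := exists_nat_ge t
        exact ⟨n, ht, hn⟩
    have hint_union : IntegrableOn f (⋃ n : ℕ, Set.Ioc (0:ℝ) n) := by
      rw [hIocU]; exact hf_int0
    have htend := tendsto_setIntegral_of_monotone (fun n : ℕ => measurableSet_Ioc)
      (fun i j hij => Set.Ioc_subset_Ioc le_rfl (by exact_mod_cast hij))
      hint_union
    rw [hIocU, hf_prob] at htend
    exact (htend.eventually (eventually_gt_nhds (by norm_num : (1:ℝ)/2 < 1))).exists
  set a : ℝ := (n:ℝ) with ha_def
  have hfa_pos : 0 < ∫ t in Set.Ioc (0:ℝ) a, f t := lt_trans (by norm_num) hn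
  have ha_pos : 0 < a := by
    by_contra h
    push_neg at h
    rw [Set.Ioc_eq_empty (by exact fun hlt => absurd hlt (not_lt.mpr h)), Measure.restrict_empty,
      integral_zero_measure] at hfa_pos
    exact lt_irrefl 0 hfa_pos
  set c : ℝ := ∫ t in Set.Ioc (0:ℝ) a, t^2 * f t with hc_def
  have hc_pos : 0 < c := by
    rw [hc_def, setIntegral_pos_iff_support_of_nonneg_ae
      (Filter.Eventually.of_forall fun t => ht2f_nonneg t)
      (aux_block_int f hf_meas hf_nonneg hf_int 2 0 a le_rfl)]
    rw [setIntegral_pos_iff_support_of_nonneg_ae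
      (Filter.Eventually.of_forall fun t => hf_nonneg t) hf_int.integrableOn] at hfa_pos
    refine lt_of_lt_of_le hfa_pos (measure_mono fun x hx => ?_)
    obtain ⟨hx1, hx2⟩ := hx
    refine ⟨?_, hx2⟩
    simp only [Function.mem_support] at hx1 ⊢
    have hx0 : 0 < x := hx2.1
    intro hcontra
    exact hx1 ((mul_eq_zero.mp hcontra).resolve_left (pow_ne_zero 2 hx0.ne'))
  -- threshold a'
  set a' : ℝ := max (max a x₀) 1 with ha'def
  have ha'a : a ≤ a' := le_trans (le_max_left _ _) (le_max_left _ _)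
  have ha'x₀ : x₀ ≤ a' := le_trans (le_max_right _ _) (le_max_left _ _)
  have ha'1 : (1:ℝ) ≤ a' := le_max_right _ _
  have ha'pos : (0:ℝ) < a' := lt_of_lt_of_le one_pos ha'1
  -- main lower bound on TsrptMean
  have hMain : ∀ lam : ℝ, 0 < lam → lam < 1/m →
      ∀ b, a' ≤ b →
        lam * c / (2 * ((1 - lam * m) + lam * G b)^2) * tailS f b ≤ TsrptMean f lam := by
    intro lam hlam0 hlam1 b hb
    have hδ : 0 < 1 - lam * m := by
      have h := (lt_div_iff₀ hm_pos).mp hlam1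
      linarith
    have hρ : ∀ x, 1 - rhoLe f lam x = (1 - lam * m) + lam * G x := hrho lam
    have hρpos : ∀ x, 0 < 1 - rhoLe f lam x := by
      intro x
      rw [hρ x]
      nlinarith [hG_nonneg x, mul_nonneg hlam0.le (hG_nonneg x)]
    have hρδ : ∀ x, 1 - lam * m ≤ 1 - rhoLe f lam x := by
      intro x
      rw [hρ x]
      nlinarith [mul_nonneg hlam0.le (hG_nonneg x)]
    -- measurability of Tsrpt1
    have hcont1 : Continuous fun x => ∫ t in (0:ℝ)..x, t^2 * f t :=
      intervalIntegral.continuous_primitive (fun a b => ht2_int.intervalIntegrable) 0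
    have hcontρ : Continuous (rhoLe f lam) := by
      have hcp : Continuous fun x => ∫ t in (0:ℝ)..x, t * f t :=
        intervalIntegral.continuous_primitive (fun a b => htf_int.intervalIntegrable) 0
      exact continuous_const.mul hcp
    have hcont2 : Continuous fun x => ∫ t in (0:ℝ)..x, 1/(1 - rhoLe f lam t) := by
      refine intervalIntegral.continuous_primitive
        (fun a b => Continuous.intervalIntegrable ?_ a b) 0
      exact continuous_const.div (continuous_const.sub hcontρ) (fun x => (hρpos x).ne')
    have hmeasT : Measurable (fun x => Tsrpt1 f lam x) := by
      simp only [Tsrpt1]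
      refine Measurable.add (Measurable.div ?_ ?_) hcont2.measurable
      · exact ((hcont1.measurable).const_mul lam).add
          (((measurable_id.pow_const 2).const_mul lam).mul hTanti.measurable)
      · exact (((continuous_const.sub hcontρ).measurable).pow_const 2).const_mul 2
    -- nonnegativity and upper bound for Tsrpt1 on Ioi 0
    have hT1nonneg : ∀ x ∈ Set.Ioi (0:ℝ), 0 ≤ Tsrpt1 f lam x := by
      intro x hx
      have hx0 : (0:ℝ) < x := hx
      have h1 : 0 ≤ ∫ t in (0:ℝ)..x, t^2 * f t :=
        intervalIntegral.integral_nonneg hx0.le fun u _ => ht2f_nonneg u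
      have h2 : 0 ≤ ∫ t in (0:ℝ)..x, 1/(1 - rhoLe f lam t) :=
        intervalIntegral.integral_nonneg hx0.le fun u _ => div_nonneg zero_le_one (hρpos u).le
      have h3 : 0 ≤ lam * x^2 * tailS f x := mul_nonneg (by positivity) (hTnonneg x)
      simp only [Tsrpt1]
      refine add_nonneg (div_nonneg ?_ ?_) h2
      · exact add_nonneg (mul_nonneg hlam0.le h1) h3
      · positivity
    have hT1bound : ∀ x ∈ Set.Ioi (0:ℝ),
        Tsrpt1 f lam x ≤ lam * (M₂ + M₂)/(2*(1-lam*m)^2) + x * (1/(1-lam*m)) := by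
      intro x hx
      have hx0 : (0:ℝ) < x := hx
      have h1 : 0 ≤ ∫ t in (0:ℝ)..x, t^2 * f t :=
        intervalIntegral.integral_nonneg hx0.le fun u _ => ht2f_nonneg u
      have h3 : 0 ≤ lam * x^2 * tailS f x := mul_nonneg (by positivity) (hTnonneg x)
      have hfrac : (lam * (∫ t in (0:ℝ)..x, t ^ 2 * f t) + lam * x ^ 2 * tailS f x)
          / (2 * (1 - rhoLe f lam x) ^ 2) ≤ lam * (M₂ + M₂)/(2*(1-lam*m)^2) := by
        apply div_le_div₀ (by positivity) ?_ (by positivity) ?_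
        · have hA := mul_le_mul_of_nonneg_left (hI2M x hx0) hlam0.le
          have hB : lam * x^2 * tailS f x ≤ lam * M₂ := by
            rw [mul_assoc]
            exact mul_le_mul_of_nonneg_left (hx2F x hx0) hlam0.le
          linarith
        · have h := pow_le_pow_left₀ hδ.le (hρδ x) 2
          linarith
      have hsec : (∫ t in (0:ℝ)..x, 1/(1 - rhoLe f lam t)) ≤ x * (1/(1-lam*m)) := by
        have h1 : (∫ t in (0:ℝ)..x, 1/(1 - rhoLe f lam t))
            ≤ ∫ t in (0:ℝ)..x, 1/(1-lam*m) := by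
          refine intervalIntegral.integral_mono_on hx0.le ?_ intervalIntegrable_const ?_
          · exact Continuous.intervalIntegrable
              (continuous_const.div (continuous_const.sub hcontρ) (fun y => (hρpos y).ne')) 0 x
          · intro t _
            exact one_div_le_one_div_of_le hδ (hρδ t)
        rw [intervalIntegral.integral_const] at h1
        simpa using h1
      calc Tsrpt1 f lam x
          = (lam * (∫ t in (0:ℝ)..x, t ^ 2 * f t) + lam * x ^ 2 * tailS f x)
              / (2 * (1 - rhoLe f lam x) ^ 2)
            + ∫ t in (0:ℝ)..x, 1 / (1 - rhoLe f lam t) := rfl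
        _ ≤ lam * (M₂ + M₂)/(2*(1-lam*m)^2) + x * (1/(1-lam*m)) := add_le_add hfrac hsec
    -- integrability of the mean integrand
    have hint : IntegrableOn (fun x => Tsrpt1 f lam x * f x) (Set.Ioi 0) := by
      refine Integrable.mono'
        (g := fun x => (lam * (M₂ + M₂)/(2*(1-lam*m)^2)) * f x + (1/(1-lam*m)) * (x * f x)) ?_
        ((hmeasT.mul hf_meas).aestronglyMeasurable) ?_
      · exact (hf_int0.const_mul _).add (hm_int.const_mul _)
      · rw [ae_restrict_iff' measurableSet_Ioi]
        refine Filter.Eventually.of_forall fun x hx => ?_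
        rw [Real.norm_of_nonneg (mul_nonneg (hT1nonneg x hx) (hf_nonneg x))]
        calc Tsrpt1 f lam x * f x
            ≤ (lam * (M₂ + M₂)/(2*(1-lam*m)^2) + x * (1/(1-lam*m))) * f x :=
              mul_le_mul_of_nonneg_right (hT1bound x hx) (hf_nonneg x)
          _ = (lam * (M₂ + M₂)/(2*(1-lam*m)^2)) * f x + (1/(1-lam*m)) * (x * f x) := by ring
    -- pointwise lower bound on Ioi b
    have hb0 : 0 < b := lt_of_lt_of_le ha'pos hb
    have hba : a ≤ b := le_trans ha'a hb
    have hstep1 : ∀ x ∈ Set.Ioi b,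
        lam * c / (2 * ((1 - lam*m) + lam * G b)^2) ≤ Tsrpt1 f lam x := by
      intro x hx
      have hxb : b ≤ x := le_of_lt hx
      have hx0 : 0 < x := lt_of_lt_of_le hb0 hxb
      have hnum : lam * c ≤ lam * (∫ t in (0:ℝ)..x, t^2 * f t) + lam * x^2 * tailS f x := by
        have h1 : c ≤ ∫ t in (0:ℝ)..x, t^2 * f t := by
          rw [intervalIntegral.integral_of_le hx0.le, hc_def]
          exact setIntegral_mono_set (aux_block_int f hf_meas hf_nonneg hf_int 2 0 x le_rfl)
            (Filter.Eventually.of_forall fun t => ht2f_nonneg t)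
            (HasSubset.Subset.eventuallyLE (Set.Ioc_subset_Ioc_right (le_trans hba hxb)))
        have h2 : 0 ≤ lam * x^2 * tailS f x := mul_nonneg (by positivity) (hTnonneg x)
        nlinarith
      have hden : 2 * (1 - rhoLe f lam x)^2 ≤ 2 * ((1 - lam*m) + lam * G b)^2 := by
        rw [hρ x]
        have h1 : G x ≤ G b := hG_anti hxb
        have h3 := mul_nonneg hlam0.le (hG_nonneg x)
        have h4 : (1 - lam*m) + lam * G x ≤ (1 - lam*m) + lam * G b := by
          have := mul_le_mul_of_nonneg_left h1 hlam0.le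
          linarith
        have h5 := pow_le_pow_left₀ (by linarith : (0:ℝ) ≤ (1 - lam*m) + lam * G x) h4 2
        linarith
      have hdpos : 0 < 2 * (1 - rhoLe f lam x)^2 := mul_pos two_pos (pow_pos (hρpos x) 2)
      have hnum0 : 0 ≤ lam * (∫ t in (0:ℝ)..x, t^2 * f t) + lam * x^2 * tailS f x :=
        le_trans (mul_nonneg hlam0.le hc_pos.le) hnum
      have h2nd : 0 ≤ ∫ t in (0:ℝ)..x, 1/(1 - rhoLe f lam t) :=
        intervalIntegral.integral_nonneg hx0.le fun u _ => div_nonneg zero_le_one (hρpos u).le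
      have hfrac := div_le_div₀ hnum0 hnum hdpos hden
      calc lam * c / (2 * ((1 - lam*m) + lam * G b)^2)
          ≤ (lam * (∫ t in (0:ℝ)..x, t^2 * f t) + lam * x^2 * tailS f x)
              / (2 * (1 - rhoLe f lam x)^2) := hfrac
        _ ≤ (lam * (∫ t in (0:ℝ)..x, t^2 * f t) + lam * x^2 * tailS f x)
              / (2 * (1 - rhoLe f lam x)^2)
            + ∫ t in (0:ℝ)..x, 1 / (1 - rhoLe f lam t) := le_add_of_nonneg_right h2nd
        _ = Tsrpt1 f lam x := rfl
    have hnonneg_ae : 0 ≤ᶠ[ae (volume.restrict (Set.Ioi (0:ℝ)))]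
        fun x => Tsrpt1 f lam x * f x := by
      rw [Filter.EventuallyLE, ae_restrict_iff' measurableSet_Ioi]
      exact Filter.Eventually.of_forall fun x hx =>
        mul_nonneg (hT1nonneg x hx) (hf_nonneg x)
    calc lam * c / (2 * ((1 - lam*m) + lam * G b)^2) * tailS f b
        = ∫ x in Set.Ioi b, lam * c / (2 * ((1 - lam*m) + lam * G b)^2) * f x := by
          simp only [tailS]
          rw [integral_const_mul]
      _ ≤ ∫ x in Set.Ioi b, Tsrpt1 f lam x * f x := by
          refine setIntegral_mono_on ((hf_int.integrableOn).const_mul _)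
            (hint.mono_set (Set.Ioi_subset_Ioi hb0.le)) measurableSet_Ioi
            (fun x hx => mul_le_mul_of_nonneg_right (hstep1 x hx) (hf_nonneg x))
      _ ≤ ∫ x in Set.Ioi 0, Tsrpt1 f lam x * f x :=
          setIntegral_mono_set hint hnonneg_ae
            (HasSubset.Subset.eventuallyLE (Set.Ioi_subset_Ioi hb0.le))
      _ = TsrptMean f lam := rfl
  -- constants for the final estimate
  have h1ε : (0:ℝ) < 1 + ε := by linarith
  set θ : ℝ := ε/(2*(1+ε)) with hθdef
  have hθpos : 0 < θ := div_pos hε (by linarith)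
  have hθlt : θ < 1 := by
    rw [hθdef, div_lt_one (by linarith)]
    linarith
  set K₄ : ℝ := (8*K₁/(c*θ)) * (C₃/m)^(1-θ) with hK₄def
  have hCm_pos : (0:ℝ) < (C₃/m)^(1-θ) := Real.rpow_pos_of_pos (div_pos hC₃pos hm_pos) _
  have hK₄pos : 0 < K₄ :=
    mul_pos (div_pos (by linarith) (mul_pos hc_pos hθpos)) hCm_pos
  rw [NormedAddCommGroup.tendsto_nhds_zero]
  intro η hη
  obtain ⟨B, hBa', hBlt⟩ : ∃ B : ℝ, a' ≤ B ∧ K₄ * B^(-(ε/2)) < η := by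
    have h1 : Tendsto (fun B : ℝ => K₄ * B^(-(ε/2))) atTop (nhds (K₄ * 0)) :=
      (tendsto_rpow_neg_atTop (by linarith : (0:ℝ) < ε/2)).const_mul K₄
    rw [mul_zero] at h1
    have h2 := (h1.eventually (eventually_lt_nhds hη)).and (eventually_ge_atTop a')
    obtain ⟨B, hB1, hB2⟩ := h2.exists
    exact ⟨B, hB2, hB1⟩
  have hBpos : 0 < B := lt_of_lt_of_le ha'pos hBa'
  have hBx₀ : x₀ ≤ B := le_trans ha'x₀ hBa'
  have hGB : 0 < G B := hG_pos B hBpos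
  have E1 : ∀ᶠ lam in nhdsWithin (1/m) (Set.Iio (1/m)), 0 < lam :=
    (eventually_gt_nhds hminv).filter_mono nhdsWithin_le_nhds
  have E2 : ∀ᶠ lam in nhdsWithin (1/m) (Set.Iio (1/m)), lam ∈ Set.Iio (1/m) :=
    eventually_mem_nhdsWithin
  have E3 : ∀ᶠ lam in nhdsWithin (1/m) (Set.Iio (1/m)), 1 - lam * m < lam * G B := by
    have h1 : Tendsto (fun lam : ℝ => 1 - lam * m) (nhdsWithin (1/m) (Set.Iio (1/m)))
        (nhds 0) := by
      have hcont : Continuous fun lam : ℝ => 1 - lam * m :=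
        continuous_const.sub (continuous_id.mul continuous_const)
      have h := (hcont.tendsto (1/m)).mono_left
        (nhdsWithin_le_nhds (s := Set.Iio (1/m)))
      simpa [one_div, inv_mul_cancel₀ hm_pos.ne'] using h
    have h2 : Tendsto (fun lam : ℝ => lam * G B) (nhdsWithin (1/m) (Set.Iio (1/m)))
        (nhds ((1/m) * G B)) := by
      have hcont : Continuous fun lam : ℝ => lam * G B := continuous_id.mul continuous_const
      exact (hcont.tendsto (1/m)).mono_left nhdsWithin_le_nhds
    exact h1.eventually_lt h2 (by positivity)
  filter_upwards [E1, E2, E3] with lam hlam0 hlam1' hlam2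
  have hlam1 : lam < 1/m := hlam1'
  have hδpos : 0 < 1 - lam * m := by
    have h := (lt_div_iff₀ hm_pos).mp hlam1
    linarith
  have hδ1 : 1 - lam * m < 1 := by
    have := mul_pos hlam0 hm_pos
    linarith
  obtain ⟨X, hXB, hXlt⟩ : ∃ X, B ≤ X ∧ G X < (1 - lam * m)/lam := by
    have h := (hG_to0.eventually (eventually_lt_nhds
      (div_pos hδpos hlam0))).and (eventually_ge_atTop B)
    obtain ⟨X, h1, h2⟩ := h.exists
    exact ⟨X, h2, h1⟩
  obtain ⟨b, hbmem, hGbeq⟩ : ∃ b ∈ Set.Icc B X, G b = (1 - lam*m)/lam := by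
    have hmem : (1 - lam*m)/lam ∈ Set.Icc (G X) (G B) := by
      refine ⟨hXlt.le, ?_⟩
      rw [div_le_iff₀ hlam0]
      linarith
    obtain ⟨b, hb1, hb2⟩ := intermediate_value_Icc' hXB hG_cont.continuousOn hmem
    exact ⟨b, hb1, hb2⟩
  have hbB : B ≤ b := hbmem.1
  have hba' : a' ≤ b := le_trans hBa' hbB
  have hbx₀ : x₀ ≤ b := le_trans hBx₀ hbB
  have hb0 : 0 < b := lt_of_lt_of_le hBpos hbB
  have hFb : 0 < tailS f b := hunbounded b hb0
  have hT := hMain lam hlam0 hlam1 b hba'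
  have hDval : (1 - lam*m) + lam * G b = 2*(1 - lam*m) := by
    rw [hGbeq, mul_div_cancel₀ _ hlam0.ne']
    ring
  rw [hDval] at hT
  have hFblow : (1 - lam*m)/(lam * (K₁ * b)) ≤ tailS f b := by
    have h := hGK b hbx₀
    rw [hGbeq] at h
    rw [div_le_iff₀ (mul_pos hlam0 (mul_pos hK₁pos hb0))]
    calc 1 - lam*m = lam * ((1-lam*m)/lam) := by field_simp
      _ ≤ lam * (K₁ * b * tailS f b) := mul_le_mul_of_nonneg_left h hlam0.le
      _ = tailS f b * (lam * (K₁ * b)) := by ring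
  have hPpos : 0 < c/(8*(K₁*b)*(1-lam*m)) :=
    div_pos hc_pos (mul_pos (mul_pos (by norm_num) (mul_pos hK₁pos hb0)) hδpos)
  have hTlow : c/(8*(K₁*b)*(1-lam*m)) ≤ TsrptMean f lam := by
    refine le_trans ?_ hT
    have heq : c/(8*(K₁*b)*(1-lam*m))
        = lam * c / (2*(2*(1-lam*m))^2) * ((1-lam*m)/(lam*(K₁*b))) := by
      field_simp
      ring
    rw [heq]
    have hpos2 : (0:ℝ) ≤ lam * c / (2*(2*(1-lam*m))^2) :=
      div_nonneg (mul_nonneg hlam0.le hc_pos.le) (by positivity)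
    exact mul_le_mul_of_nonneg_left hFblow hpos2
  have hTpos : 0 < TsrptMean f lam := lt_of_lt_of_le hPpos hTlow
  have hL0 : 0 ≤ Real.log (1/(1 - lam*m)) :=
    Real.log_nonneg ((le_div_iff₀ hδpos).mpr (by linarith : 1*(1 - lam*m) ≤ 1))
  rw [Real.norm_eq_abs, abs_of_nonneg (div_nonneg hL0 hTpos.le)]
  have hr1 : Real.log (1/(1 - lam*m)) / TsrptMean f lam
      ≤ Real.log (1/(1 - lam*m)) * (8*(K₁*b)*(1-lam*m)) / c := by
    calc Real.log (1/(1 - lam*m)) / TsrptMean f lam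
        ≤ Real.log (1/(1 - lam*m)) / (c/(8*(K₁*b)*(1-lam*m))) :=
          div_le_div_of_nonneg_left hL0 hPpos hTlow
      _ = Real.log (1/(1 - lam*m)) * (8*(K₁*b)*(1-lam*m)) / c := by
          rw [div_div_eq_mul_div]
  have hlog : Real.log (1/(1 - lam*m)) ≤ (1/θ) * (1 - lam*m)^(-θ) := by
    have h1 : Real.log ((1/(1 - lam*m))^θ) = θ * Real.log (1/(1 - lam*m)) :=
      Real.log_rpow (by positivity) θ
    have h2 : Real.log ((1/(1 - lam*m))^θ) ≤ (1/(1 - lam*m))^θ := by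
      have h := Real.log_le_sub_one_of_pos
        (show (0:ℝ) < (1/(1 - lam*m))^θ from Real.rpow_pos_of_pos (by positivity) θ)
      linarith
    have h3 : ((1:ℝ)/(1 - lam*m))^θ = (1 - lam*m)^(-θ) := by
      rw [one_div, Real.inv_rpow hδpos.le, ← Real.rpow_neg hδpos.le]
    calc Real.log (1/(1 - lam*m))
        = (1/θ) * (θ * Real.log (1/(1 - lam*m))) := by
          field_simp
      _ ≤ (1/θ) * ((1 - lam*m)^(-θ)) := by
          rw [← h1, ← h3]
          exact mul_le_mul_of_nonneg_left h2 (one_div_nonneg.mpr hθpos.le)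
  have hδb : (1 - lam*m) ≤ (C₃/m) * b^(-(1+ε)) := by
    have h := hGb_poly b hbx₀
    rw [hGbeq] at h
    calc (1 - lam*m) = lam * ((1-lam*m)/lam) := by field_simp
      _ ≤ lam * (C₃ * b^(-(1+ε))) := mul_le_mul_of_nonneg_left h hlam0.le
      _ ≤ (1/m) * (C₃ * b^(-(1+ε))) :=
          mul_le_mul_of_nonneg_right hlam1.le
            (mul_nonneg hC₃pos.le (Real.rpow_nonneg hb0.le _))
      _ = (C₃/m) * b^(-(1+ε)) := by ring
  have hpow1 : (1 - lam*m) * (1 - lam*m)^(-θ) = (1 - lam*m)^(1-θ) := by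
    nth_rewrite 1 [← Real.rpow_one (1 - lam*m)]
    rw [← Real.rpow_add hδpos, ← sub_eq_add_neg]
  have hpow2 : (1 - lam*m)^(1-θ) ≤ (C₃/m)^(1-θ) * b^(-(1+ε)*(1-θ)) := by
    have h1 : (1 - lam*m)^(1-θ) ≤ ((C₃/m) * b^(-(1+ε)))^(1-θ) :=
      Real.rpow_le_rpow hδpos.le hδb (by linarith)
    rwa [Real.mul_rpow (div_nonneg hC₃pos.le hm_pos.le) (Real.rpow_nonneg hb0.le _),
      ← Real.rpow_mul hb0.le] at h1
  have hexp : b * b^(-(1+ε)*(1-θ)) = b^(-(ε/2)) := by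
    nth_rewrite 1 [← Real.rpow_one b]
    rw [← Real.rpow_add hb0]
    congr 1
    rw [hθdef]
    field_simp
    ring
  have hfinal : Real.log (1/(1 - lam*m)) * (8*(K₁*b)*(1-lam*m)) / c ≤ K₄ * b^(-(ε/2)) := by
    have hb1 : Real.log (1/(1 - lam*m)) * (8*(K₁*b)*(1-lam*m))
        ≤ ((1/θ) * (1 - lam*m)^(-θ)) * (8*(K₁*b)*(1-lam*m)) :=
      mul_le_mul_of_nonneg_right hlog
        (mul_nonneg (mul_nonneg (by norm_num) (mul_nonneg hK₁pos.le hb0.le)) hδpos.le)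
    have heq2 : ((1/θ) * (1 - lam*m)^(-θ)) * (8*(K₁*b)*(1-lam*m)) / c
        = (8*K₁/(c*θ)) * (b * ((1 - lam*m) * (1 - lam*m)^(-θ))) := by
      field_simp
    calc Real.log (1/(1 - lam*m)) * (8*(K₁*b)*(1-lam*m)) / c
        ≤ ((1/θ) * (1 - lam*m)^(-θ)) * (8*(K₁*b)*(1-lam*m)) / c :=
          (div_le_div_iff_of_pos_right hc_pos).mpr hb1
      _ = (8*K₁/(c*θ)) * (b * ((1 - lam*m) * (1 - lam*m)^(-θ))) := heq2
      _ = (8*K₁/(c*θ)) * (b * (1 - lam*m)^(1-θ)) := by rw [hpow1]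
      _ ≤ (8*K₁/(c*θ)) * (b * ((C₃/m)^(1-θ) * b^(-(1+ε)*(1-θ)))) := by
          refine mul_le_mul_of_nonneg_left ?_
            (div_nonneg (by linarith) (mul_nonneg hc_pos.le hθpos.le))
          exact mul_le_mul_of_nonneg_left hpow2 hb0.le
      _ = K₄ * (b * b^(-(1+ε)*(1-θ))) := by rw [hK₄def]; ring
      _ = K₄ * b^(-(ε/2)) := by rw [hexp]
  have hmono : K₄ * b^(-(ε/2)) ≤ K₄ * B^(-(ε/2)) := by
    refine mul_le_mul_of_nonneg_left ?_ hK₄pos.le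
    rw [Real.rpow_neg hb0.le, Real.rpow_neg hBpos.le]
    exact inv_anti₀ (Real.rpow_pos_of_pos hBpos _)
      (Real.rpow_le_rpow hBpos.le hbB (by linarith))
  linarith [hr1, hfinal, hmono, hBlt]
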